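/- For every ε > 0 and every x > 0, the second derivative of x ↦ ln(G_ε(x)), which equals (1/ε²)·(exp(x/ε)/(1 + exp(x/ε))²)·(1/ln(1 + exp(x/ε)))·(1 − exp(x/ε)/ln(1 + exp(x/ε))), satisfies −1/x² < (ln G_ε)''(x) < exp(−x/ε)/(ε·x) − 1/((1 + exp(−x/ε))²·(x + ε·ln 2)²). -/

import Mathlib

/-- For `ε > 0`, the smooth approximation `G_ε(x) = ε · ln(1 + exp(x/ε))` of `max(x, 0)`. -/
noncomputable def Geps (ε x : ℝ) : ℝ := ε * Real.log (1 + Real.exp (x / ε))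

/-- The second derivative of `x ↦ ln(G_ε(x))`:
`(ln G_ε)''(x) = (1/ε²)·(exp(x/ε)/(1 + exp(x/ε))²)·(1/ln(1 + exp(x/ε)))·(1 − exp(x/ε)/ln(1 + exp(x/ε)))`. -/
noncomputable def logGepsDeriv2 (ε x : ℝ) : ℝ :=
  (1 / ε ^ 2) * (Real.exp (x / ε) / (1 + Real.exp (x / ε)) ^ 2) *
    (1 / Real.log (1 + Real.exp (x / ε))) *
    (1 - Real.exp (x / ε) / Real.log (1 + Real.exp (x / ε)))

/-- Auxiliary: the first derivative of `z ↦ ln(G_ε(z))`. -/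
noncomputable def gAux (ε y : ℝ) : ℝ :=
  Real.exp (y / ε) / (ε * (1 + Real.exp (y / ε)) * Real.log (1 + Real.exp (y / ε)))

lemma onePlusExp_pos (ε y : ℝ) : (0:ℝ) < 1 + Real.exp (y / ε) := by positivity

lemma logL_pos (ε y : ℝ) : 0 < Real.log (1 + Real.exp (y / ε)) :=
  Real.log_pos (by nlinarith [Real.exp_pos (y / ε)])

lemma hasDerivAt_E (ε : ℝ) (hε : ε ≠ 0) (y : ℝ) :
    HasDerivAt (fun z : ℝ => Real.exp (z / ε)) (Real.exp (y / ε) / ε) y := by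
  have h1 : HasDerivAt (fun z : ℝ => z / ε) (1 / ε) y := (hasDerivAt_id y).div_const ε
  have := (Real.hasDerivAt_exp (y / ε)).comp y h1
  simpa [div_eq_mul_inv, mul_comm, Function.comp_def] using this

lemma hasDerivAt_L (ε : ℝ) (hε : ε ≠ 0) (y : ℝ) :
    HasDerivAt (fun z : ℝ => Real.log (1 + Real.exp (z / ε)))
      ((Real.exp (y / ε) / ε) / (1 + Real.exp (y / ε))) y := by
  have h1 : HasDerivAt (fun z : ℝ => 1 + Real.exp (z / ε)) (Real.exp (y / ε) / ε) y :=
    (hasDerivAt_E ε hε y).const_add 1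
  exact h1.log (ne_of_gt (onePlusExp_pos ε y))

lemma deriv_logGeps (ε : ℝ) (hε : 0 < ε) :
    deriv (fun z : ℝ => Real.log (Geps ε z)) = gAux ε := by
  funext y
  have hG : HasDerivAt (fun z : ℝ => Geps ε z)
      (ε * ((Real.exp (y / ε) / ε) / (1 + Real.exp (y / ε)))) y :=
    (hasDerivAt_L ε hε.ne' y).const_mul ε
  have hGpos : Geps ε y ≠ 0 := by
    have := logL_pos ε y
    unfold Geps; positivity
  have h := hG.log hGpos
  have : HasDerivAt (fun z : ℝ => Real.log (Geps ε z)) (gAux ε y) y := by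
    convert h using 1
    unfold gAux Geps
    have h1 := (onePlusExp_pos ε y).ne'
    have h2 := (logL_pos ε y).ne'
    field_simp
  exact this.deriv

lemma hasDerivAt_gAux (ε : ℝ) (hε : 0 < ε) (x : ℝ) :
    HasDerivAt (gAux ε) (logGepsDeriv2 ε x) x := by
  have hE := hasDerivAt_E ε hε.ne' x
  have hL := hasDerivAt_L ε hε.ne' x
  have h1E : HasDerivAt (fun z : ℝ => 1 + Real.exp (z / ε)) (Real.exp (x / ε) / ε) x :=
    hE.const_add 1
  have hden : HasDerivAt
      (fun z : ℝ => ε * (1 + Real.exp (z / ε)) * Real.log (1 + Real.exp (z / ε)))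
      ((ε * (Real.exp (x / ε) / ε)) * Real.log (1 + Real.exp (x / ε)) +
        (ε * (1 + Real.exp (x / ε))) * ((Real.exp (x / ε) / ε) / (1 + Real.exp (x / ε)))) x :=
    (h1E.const_mul ε).mul hL
  have hdne : ε * (1 + Real.exp (x / ε)) * Real.log (1 + Real.exp (x / ε)) ≠ 0 := by
    have h1 := onePlusExp_pos ε x
    have h2 := logL_pos ε x
    positivity
  have h := hE.div hden hdne
  have heq : (Real.exp (x / ε) / ε *
      (ε * (1 + Real.exp (x / ε)) * Real.log (1 + Real.exp (x / ε))) -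
      Real.exp (x / ε) *
        ((ε * (Real.exp (x / ε) / ε)) * Real.log (1 + Real.exp (x / ε)) +
          (ε * (1 + Real.exp (x / ε))) * ((Real.exp (x / ε) / ε) / (1 + Real.exp (x / ε))))) /
      (ε * (1 + Real.exp (x / ε)) * Real.log (1 + Real.exp (x / ε))) ^ 2 =
      logGepsDeriv2 ε x := by
    unfold logGepsDeriv2
    have h1 := (onePlusExp_pos ε x).ne'
    have h2 := (logL_pos ε x).ne'
    field_simp
    ring
  rw [heq] at h
  exact h

set_option maxHeartbeats 1000000 in
lemma logGepsDeriv2_bounds (ε : ℝ) (hε : 0 < ε) (x : ℝ) (hx : 0 < x) :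
    -(1 / x ^ 2) < logGepsDeriv2 ε x ∧
      logGepsDeriv2 ε x <
        Real.exp (-x / ε) / (ε * x) -
          1 / ((1 + Real.exp (-x / ε)) ^ 2 * (x + ε * Real.log 2) ^ 2) := by
  set e := Real.exp (x / ε) with hedef
  set L := Real.log (1 + e) with hLdef
  have he0 : (0:ℝ) < e := Real.exp_pos _
  have he1 : (1:ℝ) < e := Real.one_lt_exp_iff.mpr (by positivity)
  have h1e : (0:ℝ) < 1 + e := by linarith
  have hL0 : (0:ℝ) < L := Real.log_pos (by linarith)
  have hxL : x < ε * L := by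
    have h : x / ε < L := by
      rw [hLdef]
      calc x / ε = Real.log e := by rw [hedef, Real.log_exp]
        _ < Real.log (1 + e) := Real.log_lt_log he0 (by linarith)
    have h2 : ε * (x / ε) = x := by field_simp
    nlinarith [mul_lt_mul_of_pos_left h hε]
  have hL2 : ε * L < x + ε * Real.log 2 := by
    have h : L < x / ε + Real.log 2 := by
      rw [hLdef]
      calc Real.log (1 + e) < Real.log (2 * e) := Real.log_lt_log h1e (by linarith)
        _ = Real.log 2 + x / ε := by rw [Real.log_mul (by norm_num) he0.ne', hedef, Real.log_exp]
        _ = x / ε + Real.log 2 := by ring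
    have h2 : ε * (x / ε + Real.log 2) = x + ε * Real.log 2 := by field_simp
    nlinarith [mul_lt_mul_of_pos_left h hε]
  have hln2 : (0:ℝ) < Real.log 2 := Real.log_pos (by norm_num)
  have hk : (0:ℝ) < x + ε * Real.log 2 := by positivity
  have hval : logGepsDeriv2 ε x = e * (L - e) / (ε ^ 2 * (1 + e) ^ 2 * L ^ 2) := by
    unfold logGepsDeriv2
    rw [← hedef, ← hLdef]
    field_simp
  constructor
  · -- lower bound
    rw [hval]
    have hrw : -(1 / x ^ 2) = (-1) / x ^ 2 := by ring
    rw [hrw, div_lt_div_iff₀ (by positivity) (by positivity)]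
    have h1 : x ^ 2 < (ε * L) ^ 2 := by nlinarith
    nlinarith [mul_lt_mul_of_pos_left h1 (mul_pos he0 he0), sq_nonneg x,
      mul_nonneg (mul_nonneg he0.le hL0.le) (sq_nonneg x), mul_pos hε hL0, sq_nonneg (ε * L)]
  · -- upper bound
    have hnege : Real.exp (-x / ε) = 1 / e := by
      rw [neg_div, Real.exp_neg, hedef, one_div]
    rw [hval, hnege]
    have hRHS : (1 / e) / (ε * x) - 1 / ((1 + 1 / e) ^ 2 * (x + ε * Real.log 2) ^ 2)
        = 1 / (e * ε * x) - e ^ 2 / ((1 + e) ^ 2 * (x + ε * Real.log 2) ^ 2) := by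
      field_simp
      ring
    rw [hRHS]
    have hLHS : e * (L - e) / (ε ^ 2 * (1 + e) ^ 2 * L ^ 2)
        = e / (ε ^ 2 * (1 + e) ^ 2 * L) - e ^ 2 / (ε ^ 2 * (1 + e) ^ 2 * L ^ 2) := by
      field_simp
    rw [hLHS]
    have hA : e / (ε ^ 2 * (1 + e) ^ 2 * L) < 1 / (e * ε * x) := by
      rw [div_lt_div_iff₀ (by positivity) (by positivity)]
      have hax : e * e * x < e * e * (ε * L) := mul_lt_mul_of_pos_left hxL (mul_pos he0 he0)
      have h3 : e * e * (ε * L) ≤ (1 + e) ^ 2 * (ε * L) :=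
        mul_le_mul_of_nonneg_right (by nlinarith) (mul_pos hε hL0).le
      nlinarith [mul_lt_mul_of_pos_left (lt_of_lt_of_le hax h3) hε]
    have hB : e ^ 2 / ((1 + e) ^ 2 * (x + ε * Real.log 2) ^ 2)
        < e ^ 2 / (ε ^ 2 * (1 + e) ^ 2 * L ^ 2) := by
      rw [div_lt_div_iff₀ (by positivity) (by positivity)]
      have h2 : (ε * L) ^ 2 < (x + ε * Real.log 2) ^ 2 :=
        pow_lt_pow_left₀ hL2 (mul_pos hε hL0).le (by norm_num)
      calc e ^ 2 * (ε ^ 2 * (1 + e) ^ 2 * L ^ 2)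
          = (e ^ 2 * (1 + e) ^ 2) * ((ε * L) ^ 2) := by ring
        _ < (e ^ 2 * (1 + e) ^ 2) * ((x + ε * Real.log 2) ^ 2) :=
            mul_lt_mul_of_pos_left h2 (by positivity)
        _ = e ^ 2 * ((1 + e) ^ 2 * (x + ε * Real.log 2) ^ 2) := by ring
    linarith

/-- For every `ε > 0` and every `x > 0`, the second derivative of
`x ↦ ln(G_ε(x))` equals `logGepsDeriv2 ε x` and satisfies the stated bounds. -/
theorem log_geps_second_deriv_bounds_pos (ε : ℝ) (hε : 0 < ε) (x : ℝ) (hx : 0 < x) :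
    deriv (deriv (fun z : ℝ => Real.log (Geps ε z))) x = logGepsDeriv2 ε x ∧
      -(1 / x ^ 2) < logGepsDeriv2 ε x ∧
      logGepsDeriv2 ε x <
        Real.exp (-x / ε) / (ε * x) -
          1 / ((1 + Real.exp (-x / ε)) ^ 2 * (x + ε * Real.log 2) ^ 2) := by
  have hderiv : deriv (deriv (fun z : ℝ => Real.log (Geps ε z))) x = logGepsDeriv2 ε x := by
    rw [deriv_logGeps ε hε]
    exact (hasDerivAt_gAux ε hε x).deriv
  exact ⟨hderiv, (logGepsDeriv2_bounds ε hε x hx).1, (logGepsDeriv2_bounds ε hε x hx).2⟩
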